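/- Let A be an affine hyperplane arrangement in ℂˡ, let cA be its cone in ℂ^{l+1}, and let (cA)* be the projectivization of cA in ℙˡ(ℂ). Then π₁(M(cA)) is isomorphic to π₁(M((cA)*)) × ℤ. -/

import Mathlib

/-- The quotient topology on the projectivization `ℙˡ(ℂ)` of `ℂ^{l+1} = ℂ × ℂˡ`,
induced from `ℂ^{l+1} ∖ {0}`. -/
noncomputable instance (l : ℕ) : TopologicalSpace (Projectivization ℂ (ℂ × (Fin l → ℂ))) :=
  TopologicalSpace.coinduced (Projectivization.mk' ℂ) inferInstance

/-- The complement `M(cA)` of the cone of the arrangement, an arrangement in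
`ℂ^{l+1} = ℂ × ℂˡ` consisting of `{(t,x) | t = 0}` and the `{(t,x) | φᵢ x = cᵢ · t}`. -/
def coneComplement (l n : ℕ) (φ : Fin n → ((Fin l → ℂ) →ₗ[ℂ] ℂ)) (c : Fin n → ℂ) :
    Set (ℂ × (Fin l → ℂ)) :=
  {p | p.1 ≠ 0 ∧ ∀ i, φ i p.2 ≠ c i * p.1}

/-- The complement `M((cA)*)` in `ℙˡ(ℂ)` of the projectivization of the cone of the
arrangement. -/
def projConeComplement (l n : ℕ) (φ : Fin n → ((Fin l → ℂ) →ₗ[ℂ] ℂ)) (c : Fin n → ℂ) :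
    Set (Projectivization ℂ (ℂ × (Fin l → ℂ))) :=
  {q | q.rep.1 ≠ 0 ∧ ∀ i, φ i q.rep.2 ≠ c i * q.rep.1}


noncomputable section
open Complex Set unitInterval

local notation "I01" => unitInterval

/-- telescoping product of ratios -/
lemma prod_div_telescope (u : ℕ → ℂ) (n : ℕ) (h : ∀ k, k ≤ n → u k ≠ 0) :
    (∏ k ∈ Finset.range n, u (k+1) / u k) = u n / u 0 := by
  induction n with
  | zero => simp [div_self (h 0 le_rfl)]
  | succ m ih =>
    rw [Finset.prod_range_succ, ih (fun k hk => h k (hk.trans (Nat.le_succ m)))]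
    have h0 := h 0 (Nat.zero_le _)
    have hm := h m (Nat.le_succ m)
    field_simp

lemma abs_min_sub_min (c a b : ℝ) : |min c a - min c b| ≤ |a - b| := by
  wlog hab : b ≤ a with H
  · rw [abs_sub_comm, abs_sub_comm a b]; exact H c b a (le_of_not_ge hab)
  have h1 : min c b ≤ min c a := min_le_min le_rfl hab
  rw [_root_.abs_of_nonneg (by linarith), _root_.abs_of_nonneg (by linarith)]
  rcases le_total c b with h | h
  · rw [min_eq_left h, min_eq_left (h.trans hab)]; linarith
  · rw [min_eq_right h]
    have h2 : min c a ≤ a := min_le_right _ _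
    linarith

lemma abs_min_sub_min' (a b c : ℝ) : |min a c - min b c| ≤ |a - b| := by
  simpa [min_comm] using abs_min_sub_min c a b

lemma I01.coe_min (x y : I01) : ((min x y : I01) : ℝ) = min (x:ℝ) (y:ℝ) := by
  rcases le_total x y with h | h
  · rw [min_eq_left h, min_eq_left (Subtype.coe_le_coe.mpr h)]
  · rw [min_eq_right h, min_eq_right (Subtype.coe_le_coe.mpr h)]

lemma mem_slitPlane_of_near_one {z : ℂ} (h : ‖z - 1‖ < 1) : z ∈ slitPlane := by
  rw [mem_slitPlane_iff]
  left
  have h2 : |(z - 1).re| ≤ ‖z - 1‖ := abs_re_le_norm _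
  have h3 : (z - 1).re = z.re - 1 := by simp
  rw [h3] at h2
  have := abs_le.mp h2
  linarith [this.1]

/-- The square lifting lemma: a continuous nonvanishing function on the unit square whose
value on the bottom edge is constant lifts through `Complex.exp`, with constant bottom edge. -/
lemma square_lift (F : I01 × I01 → ℂ) (hF : Continuous F) (hne : ∀ p, F p ≠ 0)
    (hconst : ∀ s, F (s, 0) = F (0, 0)) :
    ∃ Θ : I01 × I01 → ℂ, Continuous Θ ∧ (∀ p, Complex.exp (Θ p) = F p) ∧
      (∀ s, Θ (s, 0) = Complex.log (F (0,0))) := by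
  classical
  obtain ⟨p₀, -, hp₀⟩ := isCompact_univ.exists_isMinOn (univ_nonempty)
    ((continuous_norm.comp hF).continuousOn)
  have hmpos : 0 < ‖F p₀‖ := norm_pos_iff.mpr (hne p₀)
  have hmle : ∀ p, ‖F p₀‖ ≤ ‖F p‖ := fun p => hp₀ (mem_univ p)
  have huc := CompactSpace.uniformContinuous_of_continuous hF
  rw [Metric.uniformContinuous_iff] at huc
  obtain ⟨δ, hδ, hd⟩ := huc _ hmpos
  have key : ∀ p q : I01 × I01, dist p q < δ → ‖F p / F q - 1‖ < 1 := by
    intro p q hpq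
    have h1 : ‖F p - F q‖ < ‖F p₀‖ := by
      have := hd hpq
      rwa [Complex.dist_eq] at this
    have h2 : F p / F q - 1 = (F p - F q) / F q := by rw [div_sub_one (hne q)]
    rw [h2, norm_div, div_lt_one (norm_pos_iff.mpr (hne q))]
    exact h1.trans_le (hmle q)
  obtain ⟨n', hn'⟩ := exists_nat_one_div_lt hδ
  set N : ℕ := n' + 1 with hN
  have hNpos : (0:ℝ) < (N:ℝ) := by positivity
  have hinv : (1:ℝ)/(N:ℝ) < δ := by rw [hN]; exact_mod_cast hn'
  have hτmem : ∀ k : ℕ, min ((k:ℝ)/(N:ℝ)) 1 ∈ I01 := fun k =>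
    ⟨le_min (by positivity) zero_le_one, min_le_right _ _⟩
  let τ : ℕ → I01 := fun k => ⟨min ((k:ℝ)/(N:ℝ)) 1, hτmem k⟩
  have hτ0 : τ 0 = 0 := by
    apply Subtype.ext
    show min (((0:ℕ):ℝ)/(N:ℝ)) 1 = ((0:I01):ℝ)
    rw [Nat.cast_zero, zero_div, Set.Icc.coe_zero, min_eq_left zero_le_one]
  have hτN : τ N = 1 := by
    apply Subtype.ext
    show min (((N:ℕ):ℝ)/(N:ℝ)) 1 = ((1:I01):ℝ)
    rw [div_self hNpos.ne', min_self, Set.Icc.coe_one]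
  have hτdist : ∀ k : ℕ, dist (τ (k+1)) (τ k) ≤ 1/(N:ℝ) := by
    intro k
    rw [Subtype.dist_eq, Real.dist_eq]
    refine (abs_min_sub_min' _ _ 1).trans ?_
    rw [div_sub_div_same]
    push_cast
    rw [add_sub_cancel_left, _root_.abs_of_nonneg (by positivity)]
  let R : ℕ → I01 × I01 → ℂ := fun k p => F (p.1, min p.2 (τ (k+1))) / F (p.1, min p.2 (τ k))
  have hRnear : ∀ k p, ‖R k p - 1‖ < 1 := by
    intro k p
    apply key
    rw [Prod.dist_eq]
    simp only [dist_self]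
    rw [max_eq_right dist_nonneg]
    calc dist (min p.2 (τ (k+1))) (min p.2 (τ k))
        ≤ dist (τ (k+1)) (τ k) := by
          rw [Subtype.dist_eq, Subtype.dist_eq, Real.dist_eq, Real.dist_eq,
            I01.coe_min, I01.coe_min]
          exact abs_min_sub_min _ _ _
      _ ≤ 1/(N:ℝ) := hτdist k
      _ < δ := hinv
  have hRne : ∀ k p, R k p ≠ 0 := fun k p => div_ne_zero (hne _) (hne _)
  have hRcont : ∀ k, Continuous (R k) := by
    intro k
    exact Continuous.div
      (hF.comp (continuous_fst.prodMk (continuous_snd.min continuous_const)))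
      (hF.comp (continuous_fst.prodMk (continuous_snd.min continuous_const)))
      (fun p => hne _)
  refine ⟨fun p => Complex.log (F (0,0)) + ∑ k ∈ Finset.range N, Complex.log (R k p),
    ?_, ?_, ?_⟩
  · apply continuous_const.add
    apply continuous_finset_sum
    intro k _
    rw [continuous_iff_continuousAt]
    intro p
    exact (continuousAt_clog (mem_slitPlane_of_near_one (by
      simpa using hRnear k p))).comp (hRcont k).continuousAt
  · intro p
    show Complex.exp (Complex.log (F (0,0)) + ∑ k ∈ Finset.range N, Complex.log (R k p)) = F p
    rw [Complex.exp_add, Complex.exp_sum, Complex.exp_log (hne (0,0))]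
    rw [Finset.prod_congr rfl (fun k _ => Complex.exp_log (hRne k p))]
    have htel : (∏ k ∈ Finset.range N, F (p.1, min p.2 (τ (k+1))) / F (p.1, min p.2 (τ k)))
        = F (p.1, min p.2 (τ N)) / F (p.1, min p.2 (τ 0)) :=
      prod_div_telescope (fun k => F (p.1, min p.2 (τ k))) N (fun k _ => hne _)
    show F (0,0) * (∏ k ∈ Finset.range N,
      F (p.1, min p.2 (τ (k+1))) / F (p.1, min p.2 (τ k))) = F p
    rw [htel, hτN, hτ0, min_eq_left le_one', min_eq_right nonneg', hconst p.1,
      mul_div_cancel₀ _ (hne (0,0))]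
  · intro s
    show Complex.log (F (0,0)) + ∑ k ∈ Finset.range N, Complex.log (R k (s,0))
        = Complex.log (F (0,0))
    have hz : ∀ k ∈ Finset.range N, Complex.log (R k (s, 0)) = 0 := by
      intro k _
      show Complex.log (F (s, min 0 (τ (k+1))) / F (s, min 0 (τ k))) = 0
      rw [min_eq_left nonneg', min_eq_left nonneg', div_self (hne _), Complex.log_one]
    rw [Finset.sum_congr rfl hz, Finset.sum_const, smul_zero, add_zero]

/-- A path (continuous map on `I`) into `ℂ ∖ {0}` lifts through `exp`. -/
lemma path_lift (γ : I01 → ℂ) (hγ : Continuous γ) (hne : ∀ t, γ t ≠ 0) :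
    ∃ θ : I01 → ℂ, Continuous θ ∧ ∀ t, Complex.exp (θ t) = γ t := by
  obtain ⟨Θ, hc, hl, -⟩ := square_lift (fun p => γ p.2) (hγ.comp continuous_snd)
    (fun p => hne p.2) (fun s => rfl)
  exact ⟨fun t => Θ (0, t), hc.comp (continuous_const.prodMk continuous_id), fun t => hl (0, t)⟩

/-- A continuous function on a preconnected space whose exponential is constantly 1
is constant. -/
lemma exp_eq_one_const {Z : Type*} [TopologicalSpace Z] [PreconnectedSpace Z]
    (g : Z → ℂ) (hg : Continuous g) (h1 : ∀ z, Complex.exp (g z) = 1) (z w : Z) :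
    g z = g w := by
  have hint : ∀ z, ∃ n : ℤ, g z = n * (2 * Real.pi * Complex.I) := fun z =>
    Complex.exp_eq_one_iff.mp (h1 z)
  set q : Z → ℝ := fun z => (g z).im / (2 * Real.pi) with hq
  have hqg : ∀ z, ∃ n : ℤ, q z = n ∧ g z = n * (2 * Real.pi * Complex.I) := by
    intro z
    obtain ⟨n, hn⟩ := hint z
    refine ⟨n, ?_, hn⟩
    rw [hq]
    simp only [hn]
    have : ((n:ℂ) * (2 * Real.pi * Complex.I)).im = n * (2 * Real.pi) := by simp
    rw [this]
    field_simp
  have hqc : Continuous q := (Complex.continuous_im.comp hg).div_const _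
  have hmono : ∀ a b : Z, q a < q b → False := by
    intro a b hlt
    obtain ⟨na, hna, -⟩ := hqg a
    obtain ⟨nb, hnb, -⟩ := hqg b
    have himg : IsPreconnected (range q) := by
      rw [← image_univ]; exact isPreconnected_univ.image q hqc.continuousOn
    have hoc := himg.ordConnected
    have hmem : q a + 1/2 ∈ range q := by
      apply hoc.out (mem_range_self a) (mem_range_self b)
      refine ⟨by linarith, ?_⟩
      have hab : na < nb := by
        rw [hna, hnb] at hlt; exact_mod_cast hlt
      have h2 : (na:ℝ) + 1 ≤ nb := by exact_mod_cast hab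
      rw [hna, hnb]; linarith
    obtain ⟨u, hu⟩ := hmem
    obtain ⟨m, hm, -⟩ := hqg u
    rw [hm, hna] at hu
    have h3 : (2*(m:ℝ)) = 2*na + 1 := by linarith
    have h4 : (2*m : ℤ) = 2*na + 1 := by exact_mod_cast h3
    omega
  have hqeq : q z = q w :=
    le_antisymm (not_lt.mp fun h => hmono w z h) (not_lt.mp fun h => hmono z w h)
  obtain ⟨nz, hnz, hgz⟩ := hqg z
  obtain ⟨nw, hnw, hgw⟩ := hqg w
  have : (nz : ℝ) = nw := by rw [← hnz, ← hnw, hqeq]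
  have : nz = nw := by exact_mod_cast this
  rw [hgz, hgw, this]

/-- Two lifts of the same map have the same endpoint difference. -/
lemma lift_diff {Z : Type*} [TopologicalSpace Z] [PreconnectedSpace Z]
    (θ θ' : Z → ℂ) (hθ : Continuous θ) (hθ' : Continuous θ')
    (h : ∀ t, Complex.exp (θ t) = Complex.exp (θ' t)) (z w : Z) :
    θ z - θ' z = θ w - θ' w := by
  apply exp_eq_one_const (fun t => θ t - θ' t) (hθ.sub hθ')
  intro t
  rw [Complex.exp_sub, h t, div_self (Complex.exp_ne_zero _)]

/-! ### Degree theory for loops in `ℂ ∖ {0}` -/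

abbrev CStar := {z : ℂ // z ≠ 0}

namespace CStarDeg

variable {s : CStar}

lemma exists_lift (γ : Path s s) : ∃ θ : I01 → ℂ, Continuous θ ∧
    ∀ t, Complex.exp (θ t) = (γ t : ℂ) :=
  path_lift (fun t => (γ t : ℂ)) (continuous_subtype_val.comp γ.continuous)
    (fun t => (γ t).2)

/-- A choice of logarithm lift of a loop in `ℂ ∖ {0}`. -/
def pLift (γ : Path s s) : I01 → ℂ := (exists_lift γ).choose

lemma pLift_cont (γ : Path s s) : Continuous (pLift γ) := (exists_lift γ).choose_spec.1

lemma pLift_exp (γ : Path s s) (t : I01) : Complex.exp (pLift γ t) = (γ t : ℂ) :=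
  (exists_lift γ).choose_spec.2 t

lemma exists_deg (γ : Path s s) :
    ∃ n : ℤ, pLift γ 1 - pLift γ 0 = n * (2 * Real.pi * Complex.I) := by
  apply Complex.exp_eq_one_iff.mp
  rw [Complex.exp_sub, pLift_exp, pLift_exp, γ.source, γ.target, div_self s.2]

/-- The degree (winding number) of a loop in `ℂ ∖ {0}`. -/
def deg (γ : Path s s) : ℤ := (exists_deg γ).choose

lemma deg_spec (γ : Path s s) :
    pLift γ 1 - pLift γ 0 = deg γ * (2 * Real.pi * Complex.I) := (exists_deg γ).choose_spec

lemma deg_eq_of_lift (γ : Path s s) (θ : I01 → ℂ) (hc : Continuous θ)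
    (hl : ∀ t, Complex.exp (θ t) = (γ t : ℂ)) (n : ℤ)
    (hw : θ 1 - θ 0 = n * (2 * Real.pi * Complex.I)) : deg γ = n := by
  have hdiff := lift_diff θ (pLift γ) hc (pLift_cont γ)
    (fun t => by rw [hl, pLift_exp]) 1 0
  have h2 : (n : ℂ) * (2 * Real.pi * Complex.I) = deg γ * (2 * Real.pi * Complex.I) := by
    rw [← hw, ← deg_spec γ]
    linear_combination hdiff
  have h3 : (n : ℂ) = deg γ := mul_right_cancel₀ Complex.two_pi_I_ne_zero h2
  exact_mod_cast h3.symm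

lemma deg_homotopic (γ₀ γ₁ : Path s s) (h : γ₀.Homotopic γ₁) : deg γ₀ = deg γ₁ := by
  obtain ⟨H⟩ := h
  set F : I01 × I01 → ℂ := fun p => ((H p : CStar) : ℂ) with hF
  have hFc : Continuous F := continuous_subtype_val.comp H.continuous
  have hFne : ∀ p, F p ≠ 0 := fun p => (H p).2
  have hzero : (0 : I01) ∈ ({0, 1} : Set I01) := by simp
  have hone : (1 : I01) ∈ ({0, 1} : Set I01) := by simp
  have hconst : ∀ u, F (u, 0) = F (0, 0) := by
    intro u
    show ((H (u, 0) : CStar) : ℂ) = ((H (0, 0) : CStar) : ℂ)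
    rw [H.eq_fst u hzero, H.eq_fst 0 hzero]
  obtain ⟨Θ, hΘc, hΘl, hΘ0⟩ := square_lift F hFc hFne hconst
  -- the top/bottom difference is constant in the homotopy parameter
  have hg : ∀ u : I01, Complex.exp (Θ (u, 1) - Θ (u, 0)) = 1 := by
    intro u
    rw [Complex.exp_sub, hΘl, hΘl]
    show ((H (u,1) : CStar) : ℂ) / ((H (u,0) : CStar) : ℂ) = 1
    rw [H.eq_fst u hone, H.eq_fst u hzero]
    show (γ₀ 1 : ℂ) / (γ₀ 0 : ℂ) = 1
    rw [γ₀.source, γ₀.target, div_self s.2]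
  have hgc : Continuous fun u : I01 => Θ (u, 1) - Θ (u, 0) :=
    (hΘc.comp (continuous_id.prodMk continuous_const)).sub
      (hΘc.comp (continuous_id.prodMk continuous_const))
  have hconst2 := exp_eq_one_const _ hgc hg 0 1
  -- lifts of γ₀ and γ₁ along the edges
  have hl0 : ∀ t, Complex.exp (Θ (0, t)) = (γ₀ t : ℂ) := by
    intro t; rw [hΘl]
    show ((H (0,t) : CStar) : ℂ) = _
    rw [H.apply_zero]; rfl
  have hl1 : ∀ t, Complex.exp (Θ (1, t)) = (γ₁ t : ℂ) := by
    intro t; rw [hΘl]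
    show ((H (1,t) : CStar) : ℂ) = _
    rw [H.apply_one]; rfl
  have e0 : Θ (0, 1) - Θ (0, 0) = deg γ₀ * (2 * Real.pi * Complex.I) := by
    have hdiff := lift_diff (fun t => Θ (0, t)) (pLift γ₀)
      (hΘc.comp (continuous_const.prodMk continuous_id)) (pLift_cont γ₀)
      (fun t => by rw [hl0, pLift_exp]) 1 0
    rw [← deg_spec γ₀]
    linear_combination hdiff
  have e1 : Θ (1, 1) - Θ (1, 0) = deg γ₁ * (2 * Real.pi * Complex.I) := by
    have hdiff := lift_diff (fun t => Θ (1, t)) (pLift γ₁)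
      (hΘc.comp (continuous_const.prodMk continuous_id)) (pLift_cont γ₁)
      (fun t => by rw [hl1, pLift_exp]) 1 0
    rw [← deg_spec γ₁]
    linear_combination hdiff
  have : (deg γ₀ : ℂ) * (2 * Real.pi * Complex.I) = deg γ₁ * (2 * Real.pi * Complex.I) := by
    rw [← e0, ← e1, hconst2]
  have := mul_right_cancel₀ Complex.two_pi_I_ne_zero this
  exact_mod_cast this

lemma deg_trans (γ γ' : Path s s) : deg (γ.trans γ') = deg γ + deg γ' := by
  set θ := pLift γ
  set θ' := pLift γ'
  have hd1 : Complex.exp (θ 1 - θ' 0) = 1 := by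
    rw [Complex.exp_sub, pLift_exp, pLift_exp, γ.target, γ'.source, div_self s.2]
  let η : Path (θ 0) (θ 1) := ⟨⟨θ, pLift_cont γ⟩, rfl, rfl⟩
  let η'' : Path (θ 1) (θ' 1 + (θ 1 - θ' 0)) :=
    ⟨⟨fun t => θ' t + (θ 1 - θ' 0), (pLift_cont γ').add continuous_const⟩, by ring, rfl⟩
  have hlift : ∀ t, Complex.exp ((η.trans η'') t) = ((γ.trans γ') t : ℂ) := by
    intro t
    rw [Path.trans_apply, Path.trans_apply]
    split_ifs with h
    · exact pLift_exp γ _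
    · show Complex.exp (θ' _ + (θ 1 - θ' 0)) = _
      rw [Complex.exp_add, hd1, mul_one]
      exact pLift_exp γ' _
  apply deg_eq_of_lift _ _ (η.trans η'').continuous hlift
  show ((η.trans η'') 1 : ℂ) - ((η.trans η'') 0 : ℂ) = _
  rw [(η.trans η'').source, (η.trans η'').target]
  push_cast
  linear_combination deg_spec γ + deg_spec γ'

/-- The standard loop of winding number `n` based at `s`. -/
def loopN (s : CStar) (n : ℤ) : Path s s where
  toFun t := ⟨(s : ℂ) * Complex.exp ((n : ℂ) * (2 * Real.pi * Complex.I) * (t : ℝ)),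
    mul_ne_zero s.2 (Complex.exp_ne_zero _)⟩
  continuous_toFun := by
    apply Continuous.subtype_mk
    exact continuous_const.mul (Complex.continuous_exp.comp (continuous_const.mul
      (Complex.continuous_ofReal.comp continuous_subtype_val)))
  source' := by
    apply Subtype.ext
    show (s : ℂ) * Complex.exp ((n : ℂ) * (2 * Real.pi * Complex.I) * ((0:I01) : ℝ)) = s
    rw [Set.Icc.coe_zero]
    push_cast
    rw [mul_zero, Complex.exp_zero, mul_one]
  target' := by
    apply Subtype.ext
    show (s : ℂ) * Complex.exp ((n : ℂ) * (2 * Real.pi * Complex.I) * ((1:I01) : ℝ)) = s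
    rw [Set.Icc.coe_one]
    push_cast
    rw [mul_one, Complex.exp_int_mul_two_pi_mul_I, mul_one]

lemma deg_loopN (s : CStar) (n : ℤ) : deg (loopN s n) = n := by
  apply deg_eq_of_lift _ (fun t => Complex.log s + (n : ℂ) * (2 * Real.pi * Complex.I) * (t : ℝ))
  · exact continuous_const.add (continuous_const.mul
      (Complex.continuous_ofReal.comp continuous_subtype_val))
  · intro t
    rw [Complex.exp_add, Complex.exp_log s.2]
    rfl
  · rw [Set.Icc.coe_one, Set.Icc.coe_zero]
    push_cast
    ring

lemma nullhomotopic_of_deg_zero (γ : Path s s) (h : deg γ = 0) :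
    γ.Homotopic (Path.refl s) := by
  have hspec := deg_spec γ
  rw [h] at hspec
  push_cast at hspec
  rw [zero_mul] at hspec
  have hθ10 : pLift γ 1 = pLift γ 0 := sub_eq_zero.mp hspec
  have hcont : Continuous fun p : I01 × I01 =>
      ((⟨Complex.exp ((1 - ((p.1 : ℝ) : ℂ)) * pLift γ p.2 + ((p.1 : ℝ) : ℂ) * pLift γ 0),
        Complex.exp_ne_zero _⟩ : CStar)) := by
    apply Continuous.subtype_mk
    apply Complex.continuous_exp.comp
    have hu : Continuous fun p : I01 × I01 => (((p.1 : ℝ) : ℂ)) :=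
      Complex.continuous_ofReal.comp (continuous_subtype_val.comp continuous_fst)
    exact ((continuous_const.sub hu).mul
      ((pLift_cont γ).comp continuous_snd)).add (hu.mul continuous_const)
  refine ⟨⟨⟨⟨fun p => ⟨Complex.exp ((1 - ((p.1 : ℝ) : ℂ)) * pLift γ p.2 +
      ((p.1 : ℝ) : ℂ) * pLift γ 0), Complex.exp_ne_zero _⟩, hcont⟩, ?_, ?_⟩, ?_⟩⟩
  · intro t
    apply Subtype.ext
    show Complex.exp ((1 - (((0:I01) : ℝ) : ℂ)) * pLift γ t + (((0:I01) : ℝ) : ℂ) * pLift γ 0)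
      = (γ t : ℂ)
    rw [Set.Icc.coe_zero]
    push_cast
    rw [sub_zero, one_mul, zero_mul, add_zero, pLift_exp]
  · intro t
    apply Subtype.ext
    show Complex.exp ((1 - (((1:I01) : ℝ) : ℂ)) * pLift γ t + (((1:I01) : ℝ) : ℂ) * pLift γ 0)
      = ((Path.refl s) t : ℂ)
    rw [Set.Icc.coe_one]
    push_cast
    rw [sub_self, zero_mul, zero_add, one_mul, pLift_exp, Path.refl_apply]
    exact congrArg Subtype.val γ.source
  · intro u x hx
    have hgoal : ∀ (v : I01), v = 0 ∨ v = 1 → Complex.exp ((1 - ((u : ℝ) : ℂ)) * pLift γ v +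
        ((u : ℝ) : ℂ) * pLift γ 0) = (γ v : ℂ) := by
      rintro v (rfl | rfl)
      · rw [show (1 - ((u : ℝ) : ℂ)) * pLift γ 0 + ((u : ℝ) : ℂ) * pLift γ 0 = pLift γ 0 by ring,
          pLift_exp]
      · rw [hθ10, show (1 - ((u : ℝ) : ℂ)) * pLift γ 0 + ((u : ℝ) : ℂ) * pLift γ 0
            = pLift γ 0 by ring, pLift_exp]
        exact congrArg Subtype.val (γ.source.trans γ.target.symm)
    apply Subtype.ext
    exact hgoal x (by simpa using hx)

lemma deg_refl (s : CStar) : deg (Path.refl s) = 0 := by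
  apply deg_eq_of_lift _ (fun _ => Complex.log s) continuous_const
  · intro t
    rw [Complex.exp_log s.2]
    rfl
  · rw [sub_self]
    push_cast
    rw [zero_mul]

end CStarDeg

/-! ### Fundamental group machinery -/

open CategoryTheory

attribute [local instance] Path.Homotopic.setoid

lemma Path.Homotopic.map_lift {X Y : Type*} [TopologicalSpace X] [TopologicalSpace Y] {x₀ x₁ : X}
    (P₀ : Path x₀ x₁) (f : C(X, Y)) :
    (⟦P₀.map f.continuous⟧ : Path.Homotopic.Quotient (f x₀) (f x₁)) =
      Path.Homotopic.Quotient.map ⟦P₀⟧ f := rfl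

lemma Path.Homotopic.comp_lift {X : Type*} [TopologicalSpace X] {x₀ x₁ x₂ : X}
    (P₀ : Path x₀ x₁) (P₁ : Path x₁ x₂) :
    (⟦P₀.trans P₁⟧ : Path.Homotopic.Quotient x₀ x₂) =
      Path.Homotopic.Quotient.trans ⟦P₀⟧ ⟦P₁⟧ := rfl

namespace FGAux

variable {X Y : Type*} [TopologicalSpace X] [TopologicalSpace Y]

/-- The underlying path class of an element of the fundamental group. -/
def toQ {x : X} (p : FundamentalGroup X x) : Path.Homotopic.Quotient x x := p

/-- Build an element of the fundamental group from a path class. -/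
def ofQ {x : X} (p : Path.Homotopic.Quotient x x) : FundamentalGroup X x :=
  p

lemma toQ_ofQ {x : X} (p : Path.Homotopic.Quotient x x) : toQ (ofQ p) = p := rfl

lemma ext' {x : X} {p q : FundamentalGroup X x} (h : toQ p = toQ q) : p = q :=
  h

lemma toQ_mul {x : X} (p q : FundamentalGroup X x) :
    toQ (p * q) = (toQ q).trans (toQ p) := rfl

lemma toQ_one {x : X} : toQ (1 : FundamentalGroup X x) = ⟦Path.refl x⟧ := rfl

lemma mapFn_comp {x₀ x₁ x₂ : X} (p : Path.Homotopic.Quotient x₀ x₁)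
    (q : Path.Homotopic.Quotient x₁ x₂) (f : C(X, Y)) :
    (p.trans q).map f = (p.map f).trans (q.map f) := by
  refine Quotient.inductionOn₂ p q fun a b => ?_
  rw [← Path.Homotopic.comp_lift, ← Path.Homotopic.map_lift, ← Path.Homotopic.map_lift,
    ← Path.Homotopic.map_lift, ← Path.Homotopic.comp_lift, Path.map_trans]

lemma mapFn_refl (x : X) (f : C(X, Y)) :
    Path.Homotopic.Quotient.map (⟦Path.refl x⟧ : Path.Homotopic.Quotient x x) f
      = ⟦Path.refl (f x)⟧ := by
  have hrefl : (Path.refl x).map f.continuous = Path.refl (f x) := by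
    ext t
    rfl
  rw [← Path.Homotopic.map_lift, hrefl]

/-- The monoid homomorphism on fundamental groups induced by a continuous map. -/
def loopMap (f : C(X, Y)) (x : X) :
    FundamentalGroup X x →* FundamentalGroup Y (f x) where
  toFun p := ofQ ((toQ p).map f)
  map_one' := by
    apply ext'
    rw [toQ_ofQ, toQ_one, mapFn_refl, toQ_one]
  map_mul' p q := by
    apply ext'
    rw [toQ_ofQ, toQ_mul]
    show ((toQ q).trans (toQ p)).map f = ((toQ (ofQ ((toQ q).map f)))).trans
      ((toQ (ofQ ((toQ p).map f))))
    rw [toQ_ofQ, toQ_ofQ, mapFn_comp]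

lemma toQ_loopMap (f : C(X, Y)) (x : X) (p : FundamentalGroup X x) :
    toQ (loopMap f x p) = (toQ p).map f := rfl

/-- A homeomorphism induces an isomorphism of fundamental groups. -/
def equivOfHomeo (h : X ≃ₜ Y) (x : X) :
    FundamentalGroup X x ≃* FundamentalGroup Y (h x) := by
  apply MulEquiv.ofBijective (loopMap (h : C(X, Y)) x)
  constructor
  · intro p q hpq
    apply ext'
    have h1 : ((toQ p).map (h : C(X, Y))).map (h.symm : C(Y, X))
        = ((toQ q).map (h : C(X, Y))).map (h.symm : C(Y, X)) := by
      have := congrArg (fun r => (toQ r).map (h.symm : C(Y, X))) hpq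
      simpa only [toQ_loopMap] using this
    revert h1
    refine Quotient.inductionOn₂ (toQ p) (toQ q) fun a b => ?_
    intro h1
    rw [← Path.Homotopic.map_lift, ← Path.Homotopic.map_lift, ← Path.Homotopic.map_lift,
      ← Path.Homotopic.map_lift] at h1
    have ha : HEq (⟦(a.map h.continuous).map h.symm.continuous⟧ :
        Path.Homotopic.Quotient (h.symm (h x)) (h.symm (h x))) (⟦a⟧ :
        Path.Homotopic.Quotient x x) :=
      Path.Homotopic.hpath_hext (fun t => h.symm_apply_apply (a t))
    have hb : HEq (⟦(b.map h.continuous).map h.symm.continuous⟧ :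
        Path.Homotopic.Quotient (h.symm (h x)) (h.symm (h x))) (⟦b⟧ :
        Path.Homotopic.Quotient x x) :=
      Path.Homotopic.hpath_hext (fun t => h.symm_apply_apply (b t))
    exact eq_of_heq (ha.symm.trans (h1 ▸ hb))
  · intro q
    obtain ⟨b, hb⟩ := Quotient.exists_rep (toQ q)
    have e : x = h.symm (h x) := (h.symm_apply_apply x).symm
    refine ⟨ofQ ⟦(b.map h.symm.continuous).cast e e⟧, ?_⟩
    apply ext'
    rw [toQ_loopMap]
    erw [toQ_ofQ]
    rw [← Path.Homotopic.map_lift, ← hb]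
    apply eq_of_heq
    refine Path.Homotopic.hpath_hext (fun t => ?_)
    show h (((b.map h.symm.continuous).cast e e) t) = b t
    rw [Path.cast_coe]
    show h (h.symm (b t)) = b t
    exact h.apply_symm_apply (b t)

/-- The fundamental group of a product is the product of fundamental groups. -/
def prodEquiv {A B : Type*} [TopologicalSpace A] [TopologicalSpace B] (a : A) (b : B) :
    FundamentalGroup (A × B) (a, b) ≃* FundamentalGroup A a × FundamentalGroup B b := by
  apply MulEquiv.ofBijective
    ((loopMap (⟨Prod.fst, continuous_fst⟩ : C(A × B, A)) (a, b)).prod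
     (loopMap (⟨Prod.snd, continuous_snd⟩ : C(A × B, B)) (a, b)))
  constructor
  · intro p q hpq
    have h1 := congrArg Prod.fst hpq
    have h2 := congrArg Prod.snd hpq
    simp only [MonoidHom.prod_apply] at h1 h2
    apply ext'
    have e1 : Path.Homotopic.projLeft (toQ p) = Path.Homotopic.projLeft (toQ q) := by
      have := congrArg toQ h1
      simpa only [toQ_loopMap] using this
    have e2 : Path.Homotopic.projRight (toQ p) = Path.Homotopic.projRight (toQ q) := by
      have := congrArg toQ h2
      simpa only [toQ_loopMap] using this
    rw [← Path.Homotopic.prod_projLeft_projRight (toQ p),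
      ← Path.Homotopic.prod_projLeft_projRight (toQ q), e1, e2]
  · rintro ⟨u, v⟩
    refine ⟨ofQ (Path.Homotopic.prod (toQ u) (toQ v)), ?_⟩
    have e1 : toQ (loopMap (⟨Prod.fst, continuous_fst⟩ : C(A × B, A)) (a, b)
        (ofQ (Path.Homotopic.prod (toQ u) (toQ v)))) = toQ u := by
      rw [toQ_loopMap, toQ_ofQ]
      exact Path.Homotopic.projLeft_prod _ _
    have e2 : toQ (loopMap (⟨Prod.snd, continuous_snd⟩ : C(A × B, B)) (a, b)
        (ofQ (Path.Homotopic.prod (toQ u) (toQ v)))) = toQ v := by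
      rw [toQ_loopMap, toQ_ofQ]
      exact Path.Homotopic.projRight_prod _ _
    exact Prod.ext (ext' e1) (ext' e2)

/-- The degree map as a group isomorphism `π₁(ℂ ∖ {0}) ≃* ℤ`. -/
def degEquiv (s : CStar) : FundamentalGroup CStar s ≃* Multiplicative ℤ := by
  have hinv : ∀ (a b : Path s s), a.Homotopic b → CStarDeg.deg a = CStarDeg.deg b :=
    CStarDeg.deg_homotopic
  have hcomp : ∀ (u v : Path.Homotopic.Quotient s s),
      Quotient.liftOn (u.trans v) CStarDeg.deg hinv
        = Quotient.liftOn u CStarDeg.deg hinv + Quotient.liftOn v CStarDeg.deg hinv := by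
    intro u v
    refine Quotient.inductionOn₂ u v fun a b => ?_
    rw [← Path.Homotopic.comp_lift]
    exact CStarDeg.deg_trans a b
  let D : FundamentalGroup CStar s →* Multiplicative ℤ :=
    { toFun := fun p => Multiplicative.ofAdd (Quotient.liftOn (toQ p) CStarDeg.deg hinv)
      map_one' := by
        show Multiplicative.ofAdd
          (Quotient.liftOn (toQ (1 : FundamentalGroup CStar s)) CStarDeg.deg hinv) = 1
        have h0 : Quotient.liftOn (toQ (1 : FundamentalGroup CStar s)) CStarDeg.deg hinv = 0 := by
          rw [toQ_one]
          exact CStarDeg.deg_refl s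
        rw [h0]
        rfl
      map_mul' := by
        intro p q
        show Multiplicative.ofAdd (Quotient.liftOn (toQ (p * q)) CStarDeg.deg hinv) = _
        rw [toQ_mul, hcomp]
        rw [add_comm]
        rfl }
  apply MulEquiv.ofBijective D
  constructor
  · intro p q hpq
    -- reduce to kernel triviality by hand
    have h1 : D (p * q⁻¹) = 1 := by
      rw [map_mul, hpq, map_inv, mul_inv_cancel]
    have h2 : Quotient.liftOn (toQ (p * q⁻¹)) CStarDeg.deg hinv = 0 := by
      have h1' : Multiplicative.ofAdd
          (Quotient.liftOn (toQ (p * q⁻¹)) CStarDeg.deg hinv) = 1 := h1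
      exact ofAdd_eq_one.mp h1'
    have h3 : p * q⁻¹ = 1 := by
      apply ext'
      obtain ⟨a, ha⟩ := Quotient.exists_rep (toQ (p * q⁻¹))
      rw [← ha] at h2 ⊢
      have hdeg : CStarDeg.deg a = 0 := h2
      have hhom : a.Homotopic (Path.refl s) := CStarDeg.nullhomotopic_of_deg_zero a hdeg
      rw [toQ_one]
      exact Quotient.sound hhom
    calc p = p * q⁻¹ * q := by group
    _ = 1 * q := by rw [h3]
    _ = q := one_mul q
  · intro n
    refine ⟨ofQ ⟦CStarDeg.loopN s n.toAdd⟧, ?_⟩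
    show Multiplicative.ofAdd (Quotient.liftOn (toQ (ofQ ⟦CStarDeg.loopN s n.toAdd⟧))
      CStarDeg.deg hinv) = n
    erw [toQ_ofQ]
    have : Quotient.liftOn (⟦CStarDeg.loopN s n.toAdd⟧ : Path.Homotopic.Quotient s s)
        CStarDeg.deg hinv = n.toAdd := CStarDeg.deg_loopN s n.toAdd
    rw [this]
    rfl

end FGAux

noncomputable section Geometry

open Projectivization

variable {l n : ℕ} {φ : Fin n → ((Fin l → ℂ) →ₗ[ℂ] ℂ)} {c : Fin n → ℂ}

local notation "V" => (ℂ × (Fin l → ℂ))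

/-- The defining condition of the cone complement. -/
def goodVec (φ : Fin n → ((Fin l → ℂ) →ₗ[ℂ] ℂ)) (c : Fin n → ℂ) (v : ℂ × (Fin l → ℂ)) : Prop :=
  v.1 ≠ 0 ∧ ∀ i, φ i v.2 ≠ c i * v.1

lemma mem_coneComplement_iff (v : V) :
    v ∈ coneComplement l n φ c ↔ goodVec φ c v := Iff.rfl

lemma goodVec_smul_iff (a : ℂ) (ha : a ≠ 0) (v : V) :
    goodVec φ c (a • v) ↔ goodVec φ c v := by
  have h1 : (a • v).1 = a * v.1 := rfl
  have h2 : (a • v).2 = a • v.2 := rfl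
  unfold goodVec
  rw [h1, h2]
  constructor
  · rintro ⟨hv1, hv2⟩
    refine ⟨fun h => hv1 (by rw [h, mul_zero]), fun i hi => hv2 i ?_⟩
    rw [map_smul, smul_eq_mul, hi]
    ring
  · rintro ⟨hv1, hv2⟩
    refine ⟨mul_ne_zero ha hv1, fun i hi => hv2 i ?_⟩
    rw [map_smul, smul_eq_mul] at hi
    apply mul_left_cancel₀ ha
    rw [hi]
    ring

lemma rep_exists (v : V) (hv : v ≠ 0) :
    ∃ a : ℂˣ, (Projectivization.mk ℂ v hv).rep = (a : ℂ) • v := by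
  have h := Projectivization.mk_rep (Projectivization.mk ℂ v hv)
  rw [Projectivization.mk_eq_mk_iff] at h
  obtain ⟨a, ha⟩ := h
  exact ⟨a, by rw [← ha, Units.smul_def]⟩

lemma mem_projConeComplement_iff (v : V) (hv : v ≠ 0) :
    Projectivization.mk ℂ v hv ∈ projConeComplement l n φ c ↔ goodVec φ c v := by
  obtain ⟨a, ha⟩ := rep_exists v hv
  have : (Projectivization.mk ℂ v hv ∈ projConeComplement l n φ c) ↔
      goodVec φ c ((Projectivization.mk ℂ v hv).rep) := Iff.rfl
  rw [this, ha, goodVec_smul_iff _ a.ne_zero]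

lemma goodVec_rep (q : Projectivization ℂ V) (hq : q ∈ projConeComplement l n φ c) :
    goodVec φ c q.rep := hq

lemma continuous_mkQ : Continuous (Projectivization.mk' ℂ : {v : V // v ≠ 0} →
    Projectivization ℂ V) := continuous_coinduced_rng

lemma isOpenMap_mkQ : IsOpenMap (Projectivization.mk' ℂ : {v : V // v ≠ 0} →
    Projectivization ℂ V) := by
  intro O hO
  have hset : (Projectivization.mk' ℂ) ⁻¹' ((Projectivization.mk' ℂ) '' O)
      = ⋃ a : ℂˣ, (fun v : {v : V // v ≠ 0} =>
        (⟨(a : ℂ) • v.1, smul_ne_zero a.ne_zero v.2⟩ : {v : V // v ≠ 0})) ⁻¹' O := by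
    ext v
    simp only [Set.mem_preimage, Set.mem_image, Set.mem_iUnion]
    constructor
    · rintro ⟨w, hwO, hw⟩
      have : Projectivization.mk ℂ w.1 w.2 = Projectivization.mk ℂ v.1 v.2 := by
        rw [← Projectivization.mk'_eq_mk, ← Projectivization.mk'_eq_mk]
        exact hw
      rw [Projectivization.mk_eq_mk_iff] at this
      obtain ⟨a, ha⟩ := this
      refine ⟨a, ?_⟩
      have : (⟨(a : ℂ) • v.1, smul_ne_zero a.ne_zero v.2⟩ : {v : V // v ≠ 0}) = w := by
        apply Subtype.ext
        exact (Units.smul_def a (v.1 : V)).symm.trans ha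
      rw [this]
      exact hwO
    · rintro ⟨a, ha⟩
      refine ⟨_, ha, ?_⟩
      rw [Projectivization.mk'_eq_mk, Projectivization.mk'_eq_mk]
      rw [Projectivization.mk_eq_mk_iff]
      exact ⟨a, by rw [Units.smul_def]⟩
  apply isOpen_coinduced.mpr
  rw [hset]
  apply isOpen_iUnion
  intro a
  apply hO.preimage
  exact Continuous.subtype_mk (continuous_subtype_val.fun_const_smul (a : ℂ)) _

lemma isOpen_goodVec : IsOpen {v : V | goodVec φ c v} := by
  have : {v : V | goodVec φ c v} =
      (Prod.fst ⁻¹' ({0}ᶜ : Set ℂ)) ∩ ⋂ i, {v : V | φ i v.2 ≠ c i * v.1} := by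
    ext v
    simp [goodVec, Set.mem_iInter]
  rw [this]
  apply IsOpen.inter (isOpen_compl_singleton.preimage continuous_fst)
  apply isOpen_iInter_of_finite
  intro i
  have : {v : V | φ i v.2 ≠ c i * v.1}
      = (fun v : V => φ i v.2 - c i * v.1) ⁻¹' ({0}ᶜ : Set ℂ) := by
    ext v
    simp [sub_eq_zero]
  rw [this]
  apply isOpen_compl_singleton.preimage
  exact ((φ i).continuous_of_finiteDimensional.comp continuous_snd).sub
    (continuous_const.mul continuous_fst)

/-- The subset of nonzero vectors lying over the projective complement. -/
def U₀ (φ : Fin n → ((Fin l → ℂ) →ₗ[ℂ] ℂ)) (c : Fin n → ℂ) : Set {v : V // v ≠ 0} :=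
  {v | goodVec φ c v.1}

lemma isOpen_U₀ : IsOpen (U₀ φ c) :=
  (isOpen_goodVec (φ := φ) (c := c)).preimage continuous_subtype_val

lemma preimage_Y : (Projectivization.mk' ℂ) ⁻¹' (projConeComplement l n φ c) = U₀ φ c := by
  ext v
  show Projectivization.mk' ℂ v ∈ projConeComplement l n φ c ↔ _
  rw [Projectivization.mk'_eq_mk]
  exact mem_projConeComplement_iff v.1 v.2

lemma isOpen_Y : IsOpen (projConeComplement l n φ c) := by
  apply isOpen_coinduced.mpr
  rw [preimage_Y]
  exact isOpen_U₀

/-- The quotient map from the saturated open set onto the projective complement. -/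
def mres (φ : Fin n → ((Fin l → ℂ) →ₗ[ℂ] ℂ)) (c : Fin n → ℂ) :
    ↥(U₀ φ c) → ↥(projConeComplement l n φ c) :=
  fun u => ⟨Projectivization.mk' ℂ u.1, by
    rw [Projectivization.mk'_eq_mk]
    exact (mem_projConeComplement_iff u.1.1 u.1.2).mpr u.2⟩

lemma continuous_mres : Continuous (mres φ c) :=
  Continuous.subtype_mk (continuous_mkQ.comp continuous_subtype_val) _

lemma surjective_mres : Function.Surjective (mres φ c) := by
  intro q
  refine ⟨⟨⟨q.1.rep, Projectivization.rep_nonzero q.1⟩, goodVec_rep q.1 q.2⟩, ?_⟩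
  apply Subtype.ext
  show Projectivization.mk' ℂ _ = q.1
  rw [Projectivization.mk'_eq_mk]
  exact Projectivization.mk_rep q.1

lemma isOpenMap_mres : IsOpenMap (mres φ c) := by
  intro O hO
  rw [isOpen_induced_iff] at hO
  obtain ⟨O₁, hO₁, hOeq⟩ := hO
  have himg : mres φ c '' O
      = (Subtype.val : ↥(projConeComplement l n φ c) → Projectivization ℂ V) ⁻¹'
        ((Projectivization.mk' ℂ) '' (O₁ ∩ U₀ φ c)) := by
    ext q
    simp only [Set.mem_image, Set.mem_preimage, Set.mem_inter_iff]
    constructor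
    · rintro ⟨u, huO, rfl⟩
      exact ⟨u.1, ⟨by rw [← hOeq] at huO; exact huO, u.2⟩, rfl⟩
    · rintro ⟨w, ⟨hwO₁, hwU⟩, hw⟩
      refine ⟨⟨w, hwU⟩, ?_, ?_⟩
      · rw [← hOeq]; exact hwO₁
      · exact Subtype.ext hw
  rw [himg]
  apply IsOpen.preimage continuous_subtype_val
  exact isOpenMap_mkQ _ (hO₁.inter isOpen_U₀)

lemma isQuotientMap_mres : Topology.IsQuotientMap (mres φ c) :=
  isOpenMap_mres.isQuotientMap continuous_mres surjective_mres

/-- The affine-chart coordinates of a point of the projective complement. -/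
def gmap (φ : Fin n → ((Fin l → ℂ) →ₗ[ℂ] ℂ)) (c : Fin n → ℂ)
    (q : ↥(projConeComplement l n φ c)) : Fin l → ℂ :=
  (q.1.rep.1)⁻¹ • q.1.rep.2

lemma gmap_mk (v : V) (hv : v ≠ 0) (hv1 : v.1 ≠ 0)
    (hY : Projectivization.mk ℂ v hv ∈ projConeComplement l n φ c) :
    gmap φ c ⟨Projectivization.mk ℂ v hv, hY⟩ = (v.1)⁻¹ • v.2 := by
  obtain ⟨a, ha⟩ := rep_exists v hv
  unfold gmap
  simp only [ha]
  have h1 : ((a:ℂ) • v).1 = (a:ℂ) * v.1 := rfl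
  have h2 : ((a:ℂ) • v).2 = (a:ℂ) • v.2 := rfl
  rw [h1, h2, smul_smul]
  congr 1
  field_simp

lemma continuous_gmap : Continuous (gmap φ c) := by
  rw [(isQuotientMap_mres (φ := φ) (c := c)).continuous_iff]
  have heq : gmap φ c ∘ mres φ c = fun u : ↥(U₀ φ c) => (u.1.1.1)⁻¹ • u.1.1.2 := by
    funext u
    have hmk : mres φ c u = ⟨Projectivization.mk ℂ u.1.1 u.1.2,
        (mem_projConeComplement_iff u.1.1 u.1.2).mpr u.2⟩ :=
      Subtype.ext rfl
    show gmap φ c (mres φ c u) = _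
    rw [hmk, gmap_mk u.1.1 u.1.2 u.2.1]
  rw [heq]
  apply Continuous.fun_smul
  · exact Continuous.inv₀ (continuous_fst.comp (continuous_subtype_val.comp
      continuous_subtype_val)) (fun u => u.2.1)
  · exact continuous_snd.comp (continuous_subtype_val.comp continuous_subtype_val)

lemma gmap_cond (q : ↥(projConeComplement l n φ c)) (i : Fin n) :
    φ i (gmap φ c q) ≠ c i := by
  have h := (goodVec_rep q.1 q.2).2 i
  have h1 := (goodVec_rep q.1 q.2).1
  unfold gmap
  rw [map_smul, smul_eq_mul]
  intro hcon
  apply h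
  have h2 : q.1.rep.1 * ((q.1.rep.1)⁻¹ * φ i q.1.rep.2) = q.1.rep.1 * c i := by rw [hcon]
  rw [← mul_assoc, mul_inv_cancel₀ h1, one_mul] at h2
  rw [h2]
  ring

lemma gmap_mk_back (q : ↥(projConeComplement l n φ c)) (z : ℂ) (hz : z ≠ 0)
    (hne : (z, z • gmap φ c q) ≠ (0 : V)) :
    Projectivization.mk ℂ (z, z • gmap φ c q) hne = q.1 := by
  have h1 := (goodVec_rep q.1 q.2).1
  rw [← Projectivization.mk_rep q.1, Projectivization.mk_eq_mk_iff]
  refine ⟨Units.mk0 (z * (q.1.rep.1)⁻¹) (mul_ne_zero hz (inv_ne_zero h1)), ?_⟩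
  rw [Units.smul_def]
  show (z * (q.1.rep.1)⁻¹) • q.1.rep = _
  apply Prod.ext
  · show (z * (q.1.rep.1)⁻¹) * q.1.rep.1 = z
    field_simp
  · show (z * (q.1.rep.1)⁻¹) • q.1.rep.2 = z • gmap φ c q
    unfold gmap
    rw [smul_smul]

/-- Points of the cone complement are nonzero. -/
lemma coneComplement_ne_zero (v : V) (hv : v ∈ coneComplement l n φ c) : v ≠ 0 :=
  fun h => hv.1 (by rw [h]; rfl)

/-- The homeomorphism `M(cA) ≃ M((cA)*) × ℂ*`. -/
def theHomeo (φ : Fin n → ((Fin l → ℂ) →ₗ[ℂ] ℂ)) (c : Fin n → ℂ) :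
    ↥(coneComplement l n φ c) ≃ₜ
      ↥(projConeComplement l n φ c) × {z : ℂ // z ≠ 0} where
  toFun v := (⟨Projectivization.mk ℂ v.1 (coneComplement_ne_zero v.1 v.2),
      (mem_projConeComplement_iff v.1 (coneComplement_ne_zero v.1 v.2)).mpr v.2⟩,
    ⟨v.1.1, v.2.1⟩)
  invFun p := ⟨(p.2.1, p.2.1 • gmap φ c p.1), by
    refine ⟨p.2.2, fun i => ?_⟩
    show φ i (p.2.1 • gmap φ c p.1) ≠ c i * p.2.1
    rw [map_smul, smul_eq_mul]
    intro hcon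
    apply gmap_cond p.1 i
    apply mul_left_cancel₀ p.2.2
    rw [hcon]
    ring⟩
  left_inv v := by
    apply Subtype.ext
    apply Prod.ext
    · rfl
    · show v.1.1 • gmap φ c ⟨Projectivization.mk ℂ v.1 (coneComplement_ne_zero v.1 v.2), _⟩
        = v.1.2
      rw [gmap_mk v.1 (coneComplement_ne_zero v.1 v.2) v.2.1, smul_smul,
        mul_inv_cancel₀ v.2.1, one_smul]
  right_inv p := by
    apply Prod.ext
    · apply Subtype.ext
      show Projectivization.mk ℂ (p.2.1, p.2.1 • gmap φ c p.1) _ = p.1.1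
      exact gmap_mk_back p.1 p.2.1 p.2.2 _
    · rfl
  continuous_toFun := by
    apply Continuous.prodMk
    · apply Continuous.subtype_mk
      have : (fun v : ↥(coneComplement l n φ c) =>
          Projectivization.mk ℂ v.1 (coneComplement_ne_zero v.1 v.2))
          = (Projectivization.mk' ℂ) ∘ (fun v : ↥(coneComplement l n φ c) =>
            (⟨v.1, coneComplement_ne_zero v.1 v.2⟩ : {w : V // w ≠ 0})) := rfl
      rw [this]
      exact continuous_mkQ.comp (Continuous.subtype_mk continuous_subtype_val _)
    · exact Continuous.subtype_mk (continuous_fst.comp continuous_subtype_val) _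
  continuous_invFun := by
    apply Continuous.subtype_mk
    apply Continuous.prodMk
    · exact continuous_subtype_val.comp continuous_snd
    · exact (continuous_subtype_val.comp continuous_snd).smul
        (continuous_gmap.comp continuous_fst)

/-- A root set of a nontrivial affine equation is countable. -/
lemma countable_root (u w : ℂ) (hu : u ≠ 0) : {z : ℂ | u + z * w = 0}.Countable := by
  rcases eq_or_ne w 0 with hw | hw
  · have : {z : ℂ | u + z * w = 0} = ∅ := by
      ext z
      simp [hw, hu]
    rw [this]
    exact Set.countable_empty
  · have : {z : ℂ | u + z * w = 0}.Subsingleton := by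
      intro z1 h1 z2 h2
      simp only [Set.mem_setOf_eq] at h1 h2
      have : z1 * w = z2 * w := by
        have e1 : z1 * w = -u := by linear_combination h1
        have e2 : z2 * w = -u := by linear_combination h2
        rw [e1, e2]
      exact mul_right_cancel₀ hw this
    exact this.countable

lemma isPathConnected_coneComplement (hne : (coneComplement l n φ c).Nonempty) :
    IsPathConnected (coneComplement l n φ c) := by
  rw [isPathConnected_iff]
  refine ⟨hne, fun a ha b hb => ?_⟩
  set L : ℂ → V := fun z => a + z • (b - a) with hL
  have hLcont : Continuous L := continuous_const.add (continuous_id'.smul continuous_const)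
  have hL0 : L 0 = a := by rw [hL]; simp
  have hL1 : L 1 = b := by rw [hL]; simp
  set S : Set ℂ := {z | L z ∉ coneComplement l n φ c} with hS
  have hScount : S.Countable := by
    have hsub : S ⊆ {z : ℂ | a.1 + z * (b.1 - a.1) = 0} ∪
        ⋃ i, {z : ℂ | (φ i a.2 - c i * a.1) + z * (φ i (b.2 - a.2) - c i * (b.1 - a.1)) = 0} := by
      intro z hz
      simp only [hS, Set.mem_setOf_eq, mem_coneComplement_iff, goodVec] at hz
      rw [not_and_or] at hz
      rcases hz with hz | hz
      · left
        rw [not_not] at hz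
        show a.1 + z * (b.1 - a.1) = 0
        rw [← hz]
        rfl
      · right
        push_neg at hz
        obtain ⟨i, hi⟩ := hz
        refine Set.mem_iUnion.mpr ⟨i, ?_⟩
        show (φ i a.2 - c i * a.1) + z * (φ i (b.2 - a.2) - c i * (b.1 - a.1)) = 0
        have h2 : (L z).2 = a.2 + z • (b.2 - a.2) := rfl
        have h1 : (L z).1 = a.1 + z * (b.1 - a.1) := rfl
        rw [h2, h1, map_add, map_smul, smul_eq_mul] at hi
        linear_combination hi
    refine Set.Countable.mono hsub ?_
    apply Set.Countable.union
    · exact countable_root a.1 (b.1 - a.1) ha.1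
    · apply Set.countable_iUnion
      intro i
      exact countable_root _ _ (sub_ne_zero.mpr (ha.2 i))
  have hrank : 1 < Module.rank ℝ ℂ := by
    rw [Complex.rank_real_complex]
    norm_num
  have hpc : IsPathConnected Sᶜ := hScount.isPathConnected_compl_of_one_lt_rank hrank
  have h0 : (0:ℂ) ∈ Sᶜ := by
    simp only [hS, Set.mem_compl_iff, Set.mem_setOf_eq, not_not, hL0]
    exact ha
  have h1 : (1:ℂ) ∈ Sᶜ := by
    simp only [hS, Set.mem_compl_iff, Set.mem_setOf_eq, not_not, hL1]
    exact hb
  obtain ⟨γ, hγ⟩ := hpc.joinedIn 0 h0 1 h1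
  have hmem : ∀ t, (γ.map hLcont) t ∈ coneComplement l n φ c := by
    intro t
    have := hγ t
    simp only [hS, Set.mem_compl_iff, Set.mem_setOf_eq, not_not] at this
    exact this
  exact ⟨(γ.map hLcont).cast hL0.symm hL1.symm, fun t => hmem t⟩

end Geometry


theorem fundamental_group_cone_vs_projectivization
    (l n : ℕ) (φ : Fin n → ((Fin l → ℂ) →ₗ[ℂ] ℂ)) (c : Fin n → ℂ)
    (hφ : ∀ i, φ i ≠ 0)
    (hdist : Function.Injective fun i => ({x | φ i x = c i} : Set (Fin l → ℂ)))
    (x : ↥(coneComplement l n φ c)) (y : ↥(projConeComplement l n φ c)) :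
    Nonempty (FundamentalGroup ↥(coneComplement l n φ c) x ≃*
      FundamentalGroup ↥(projConeComplement l n φ c) y × Multiplicative ℤ) := by
  classical
  have hne : (coneComplement l n φ c).Nonempty := ⟨x.1, x.2⟩
  haveI hpcs : PathConnectedSpace ↥(coneComplement l n φ c) :=
    isPathConnected_iff_pathConnectedSpace.mp (isPathConnected_coneComplement hne)
  set h := theHomeo φ c with hh
  have e1 := FGAux.equivOfHomeo h x
  have e2 := FGAux.prodEquiv (h x).1 (h x).2
  -- a path from `(h x).1` to `y` in the projective complement
  have j1 : Joined (h x) (y, (h x).2) := by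
    have j0 : Joined (h.symm (h x)) (h.symm (y, (h x).2)) := PathConnectedSpace.joined _ _
    have j0' : Joined (h (h.symm (h x))) (h (h.symm (y, (h x).2))) :=
      ⟨j0.somePath.map h.continuous⟩
    rwa [h.apply_symm_apply, h.apply_symm_apply] at j0'
  have j2 : Joined ((h x).1) y := ⟨j1.somePath.map continuous_fst⟩
  have e3 := MulEquiv.prodCongr
    (FundamentalGroup.fundamentalGroupMulEquivOfPath j2.somePath)
    (FGAux.degEquiv (h x).2)
  exact ⟨e1.trans (e2.trans e3)⟩
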